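/- For every ℓ ∈ ℕ, the set {(−Δ)^{ℓ/2}u : u ∈ 𝓗₀^ℓ} is dense in 𝓗^{⌈ℓ/2⌉} := H^{⌈ℓ/2⌉} ∩ ℓ²(ℤ) with respect to the ℓ²(ℤ)-norm. Equivalently, if v ∈ 𝓗^{⌈ℓ/2⌉} satisfies ⟨v, (−Δ)^{ℓ/2}u⟩ = 0 for all u ∈ 𝓗₀^ℓ, then v = 0. -/

import Mathlib

noncomputable section

open scoped ENNReal

namespace HRB

/-- discrete gradient `(∇u)_n = u_n - u_{n-1}` -/
def grad (u : ℤ → ℂ) : ℤ → ℂ := fun n => u n - u (n - 1)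

/-- discrete divergence (forward difference) `(∂u)_n = u_{n+1} - u_n` -/
def fdiff (u : ℤ → ℂ) : ℤ → ℂ := fun n => u (n + 1) - u n

/-- averaging operator `(Mu)_n = (u_n + u_{n+1})/2` -/
def avg (u : ℤ → ℂ) : ℤ → ℂ := fun n => (u n + u (n + 1)) / 2

/-- negative discrete Laplacian `((-Δ)u)_n = 2u_n - u_{n-1} - u_{n+1}` -/
def negLap (u : ℤ → ℂ) : ℤ → ℂ := fun n => 2 * u n - u (n - 1) - u (n + 1)

/-- `(-Δ)^{ℓ/2}`: equal to `(-Δ)^m` if `ℓ = 2m` and to `∇ ∘ (-Δ)^m` if `ℓ = 2m+1`. -/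
def halfPow (l : ℕ) (u : ℤ → ℂ) : ℤ → ℂ :=
  if l % 2 = 0 then negLap^[l / 2] u else grad (negLap^[l / 2] u)

def gradR (u : ℤ → ℝ) : ℤ → ℝ := fun n => u n - u (n - 1)

def fdiffR (u : ℤ → ℝ) : ℤ → ℝ := fun n => u (n + 1) - u n

def negLapR (u : ℤ → ℝ) : ℤ → ℝ := fun n => 2 * u n - u (n - 1) - u (n + 1)

/-- `u ∈ H^ℓ` -/
def memH (l : ℤ) (u : ℤ → ℂ) : Prop := ∀ n : ℤ, n < l → u n = 0

/-- `u ∈ 𝓗₀^ℓ`: compactly supported elements of `H^ℓ` -/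
def memH0 (l : ℤ) (u : ℤ → ℂ) : Prop :=
  memH l u ∧ ∃ N : ℤ, ∀ n : ℤ, N ≤ n → u n = 0

/-- real-valued sequences in `H^ℓ` -/
def memHR (l : ℤ) (g : ℤ → ℝ) : Prop := ∀ n : ℤ, n < l → g n = 0

/-- `Σ_{n=a}^∞ f(n)` (as an unordered real `tsum`) -/
def qsum (a : ℤ) (f : ℤ → ℝ) : ℝ := ∑' n : ℤ, if a ≤ n then f n else 0

/-- `Σ_{n=a}^∞ f(n)` as a sum in `ℝ≥0∞` (for nonnegative `f`) -/
def esum (a : ℤ) (f : ℤ → ℝ) : ℝ≥0∞ :=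
  ∑' n : ℤ, if a ≤ n then ENNReal.ofReal (f n) else 0

/-- `⌈ℓ/2⌉` -/
def ceilHalf (l : ℕ) : ℤ := (((l + 1) / 2 : ℕ) : ℤ)

/-- `Σ_{n=⌈ℓ/2⌉}^∞ |((-Δ)^{ℓ/2}u)_n|²` -/
def energy (l : ℕ) (u : ℤ → ℂ) : ℝ :=
  qsum (ceilHalf l) fun n => ‖halfPow l u n‖ ^ 2

def eenergy (l : ℕ) (u : ℤ → ℂ) : ℝ≥0∞ :=
  esum (ceilHalf l) fun n => ‖halfPow l u n‖ ^ 2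

/-- `Σ_{n=l}^∞ ρ_n |u_n|²` -/
def wsum (l : ℤ) (ρ : ℤ → ℝ) (u : ℤ → ℂ) : ℝ := qsum l fun n => ρ n * ‖u n‖ ^ 2

def ewsum (l : ℤ) (ρ : ℤ → ℝ) (u : ℤ → ℂ) : ℝ≥0∞ := esum l fun n => ρ n * ‖u n‖ ^ 2

/-- Assumption (A1) -/
def A1 (l : ℕ) (g : ℤ → ℝ) : Prop :=
  memHR l g ∧ ∀ k : ℕ, k < l → ∀ n : ℤ, (l : ℤ) - (k : ℤ) ≤ n → 0 < fdiffR^[k] g n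

/-- Assumption (A2) -/
def A2 (l : ℕ) (g : ℤ → ℝ) : Prop :=
  ∀ k : ℕ, 1 ≤ k → k < l → ∀ n : ℤ, (l : ℤ) + 1 - (k : ℤ) ≤ n →
    0 ≤ negLapR^[l - k] (fdiffR^[k] g) n

/-- Assumption (A2') -/
def A2' (l : ℕ) (g : ℤ → ℝ) : Prop := ∀ n : ℤ, (l : ℤ) ≤ n → 0 ≤ negLapR^[l] g n

/-- Asymptotic expansion (Exp_s):
`g_n = Σ_{j=0}^{2ℓ} α_j n^{ℓ-j-s} + O(n^{-ℓ-1-s})` as `n → ∞`, with `α_0 ≠ 0`. -/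
def ExpS (l : ℕ) (g : ℤ → ℝ) (s : ℝ) : Prop :=
  ∃ α : ℕ → ℝ, α 0 ≠ 0 ∧ ∃ C : ℝ, ∃ N : ℤ, ∀ n : ℤ, N ≤ n →
    |g n - ∑ j ∈ Finset.range (2 * l + 1), α j * (n : ℝ) ^ ((l : ℝ) - (j : ℝ) - s)| ≤
      C * (n : ℝ) ^ (-(l : ℝ) - 1 - s)

/-- the weight `ρ(g)_n = ((-Δ)^ℓ g)_n / g_n` -/
def rho (l : ℕ) (g : ℤ → ℝ) : ℤ → ℝ := fun n => negLapR^[l] g n / g n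

/-- the `n`-th term of the remainder `𝓡_k^{(ℓ)}(g;u)` -/
def remTerm (l k : ℕ) (g : ℤ → ℝ) (u : ℤ → ℂ) : ℤ → ℝ := fun n =>
  (if k + 1 = l then 1
    else negLapR^[l - 1 - k] (fdiffR^[k + 1] g) n / fdiffR^[k + 1] g n) *
  ‖(Real.sqrt (fdiffR^[k] g n / fdiffR^[k] g (n + 1)) : ℂ) * fdiff^[k] u (n + 1) -
    (Real.sqrt (fdiffR^[k] g (n + 1) / fdiffR^[k] g n) : ℂ) * fdiff^[k] u n‖ ^ 2

/-- the remainder `𝓡_k^{(ℓ)}(g;u)` -/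
def rem (l k : ℕ) (g : ℤ → ℝ) (u : ℤ → ℂ) : ℝ :=
  qsum ((l : ℤ) - (k : ℤ)) (remTerm l k g u)

def erem (l k : ℕ) (g : ℤ → ℝ) (u : ℤ → ℂ) : ℝ≥0∞ :=
  esum ((l : ℤ) - (k : ℤ)) (remTerm l k g u)

/-- `ρ` is a discrete Hardy–Rellich–Birman weight for the power `ℓ` -/
def IsHRBWeight (l : ℕ) (ρ : ℤ → ℝ) : Prop :=
  (∀ n : ℤ, (l : ℤ) ≤ n → 0 ≤ ρ n) ∧
  ∀ u : ℤ → ℂ, memH0 l u → wsum l ρ u ≤ energy l u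

/-- criticality of the weight `ρ` -/
def IsCritical (l : ℕ) (ρ : ℤ → ℝ) : Prop :=
  ∀ ρ' : ℤ → ℝ, (∀ n : ℤ, (l : ℤ) ≤ n → 0 ≤ ρ' n) →
    (∀ u : ℤ → ℂ, memH0 l u → wsum l ρ' u ≤ energy l u) →
    (∀ n : ℤ, (l : ℤ) ≤ n → ρ n ≤ ρ' n) →
    ∀ n : ℤ, (l : ℤ) ≤ n → ρ' n = ρ n

/-- optimality near infinity of the weight `ρ` -/
def IsOptNearInfinity (l : ℕ) (ρ : ℤ → ℝ) : Prop :=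
  ∀ M : ℤ, (l : ℤ) ≤ M → ∀ ε : ℝ, 0 < ε →
    ∃ u : ℤ → ℂ, memH0 M u ∧ energy l u < (1 + ε) * wsum l ρ u

/-- non-attainability of the weight `ρ` -/
def IsNonAttainable (l : ℕ) (ρ : ℤ → ℝ) : Prop :=
  ∀ u : ℤ → ℂ, memH l u → ewsum l ρ u ≠ ⊤ → eenergy l u = ewsum l ρ u →
    u = 0

/-- `g^{(ℓ)}_n = √n ∏_{j=1}^{ℓ-1} (n-j)` for `n ≥ 0`, zero for `n < 0` -/
def gseq (l : ℕ) : ℤ → ℝ := fun n =>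
  if n < 0 then 0 else Real.sqrt (n : ℝ) * ∏ j ∈ Finset.Icc 1 (l - 1), ((n : ℝ) - (j : ℝ))

/-- the optimal weight `ρ^{(ℓ)}` -/
def rhoSeq (l : ℕ) : ℤ → ℝ := rho l (gseq l)

/-- `g^{(ℓ)}(q)_n = n^q ∏_{j=1}^{ℓ-1}(n-j)` for `n ≥ 0`, zero for `n < 0` -/
def gq (l : ℕ) (q : ℝ) : ℤ → ℝ := fun n =>
  if n < 0 then 0 else (n : ℝ) ^ q * ∏ j ∈ Finset.Icc 1 (l - 1), ((n : ℝ) - (j : ℝ))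

/-- `h_n = n^{ℓ-1/2}` for `n ≥ 0`, zero for `n < 0` -/
def hseq (l : ℕ) : ℤ → ℝ := fun n =>
  if n < 0 then 0 else (n : ℝ) ^ ((l : ℝ) - 1 / 2)

/-- generalized binomial coefficient `C(ν,m) = ν(ν-1)⋯(ν-m+1)/m!` -/
def genBinom (ν : ℝ) (m : ℕ) : ℝ := (∏ i ∈ Finset.range m, (ν - (i : ℝ))) / (m.factorial : ℝ)

/-- (signed) Stirling numbers of the first kind `s(n,k)`, extended by `0` for `k ≤ 0` -/
def stirling1 (n : ℕ) (k : ℤ) : ℝ :=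
  if k ≤ 0 then 0
  else (-1 : ℝ) ^ (n + k.toNat) *
    ∑ t ∈ (Finset.Icc 1 (n - 1)).powersetCard (n - k.toNat), ∏ i ∈ t, (i : ℝ)

/-- `X_m^{(ℓ)} = Σ_{j=-ℓ}^{ℓ} C(2ℓ,ℓ+j)(-1)^j j^m`, with `X_0^{(ℓ)} = 0` -/
def Xcoef (l m : ℕ) : ℝ :=
  if m = 0 then 0
  else ∑ j ∈ Finset.Icc (-(l : ℤ)) (l : ℤ),
    (((2 * l).choose ((l : ℤ) + j).toNat : ℕ) : ℝ) * (-1 : ℝ) ^ j * ((j : ℝ)) ^ m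

/-- the coefficients `r_k^{(ℓ)}` -/
def rcoef (l k : ℕ) : ℝ :=
  ∑ m ∈ Finset.Icc (2 * l) k,
    genBinom ((l : ℝ) + (m : ℝ) - (k : ℝ) - 1 / 2) m * stirling1 l ((l : ℤ) + (m : ℤ) - (k : ℤ)) *
      Xcoef l m

/-- Pochhammer symbol `(x)_ℓ = x(x+1)⋯(x+ℓ-1)` -/
def poch (x : ℝ) (l : ℕ) : ℝ := ∏ i ∈ Finset.range l, (x + (i : ℝ))



/-! ### Auxiliary lemmas for `statement13` -/

open Filter

private lemma tsum_shift' (f : ℤ → ℂ) (c : ℤ) : ∑' n, f (n + c) = ∑' n, f n :=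
  (Equiv.addRight c).tsum_eq f

/-- finite support -/
def FS (u : ℤ → ℂ) : Prop := ∃ s : Finset ℤ, ∀ n ∉ s, u n = 0

lemma FS_summable {u : ℤ → ℂ} (h : FS u) : Summable u := by
  obtain ⟨s, hs⟩ := h; exact summable_of_ne_finset_zero hs

lemma FS_mul {u : ℤ → ℂ} (g : ℤ → ℂ) (h : FS u) : FS (fun n => g n * u n) := by
  obtain ⟨s, hs⟩ := h; exact ⟨s, fun n hn => by simp [hs n hn]⟩

lemma FS_shift {u : ℤ → ℂ} (h : FS u) (c : ℤ) : FS (fun n => u (n + c)) := by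
  obtain ⟨s, hs⟩ := h
  exact ⟨s.image (· - c), fun n hn => hs _ (fun hm => hn (Finset.mem_image.2 ⟨n + c, hm, by ring⟩))⟩

lemma FS_negLap {u : ℤ → ℂ} (h : FS u) : FS (negLap u) := by
  obtain ⟨s, hs⟩ := h
  refine ⟨(s ∪ s.image (· + 1)) ∪ s.image (· - 1), fun n hn => ?_⟩
  simp only [Finset.mem_union, Finset.mem_image] at hn
  push_neg at hn
  obtain ⟨⟨h1, h2⟩, h3⟩ := hn
  have e1 : u n = 0 := hs n h1
  have e2 : u (n - 1) = 0 := hs _ (fun hm => (h2 _ hm) (by ring))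
  have e3 : u (n + 1) = 0 := hs _ (fun hm => (h3 _ hm) (by ring))
  simp [negLap, e1, e2, e3]

lemma FS_grad {u : ℤ → ℂ} (h : FS u) : FS (grad u) := by
  obtain ⟨s, hs⟩ := h
  refine ⟨s ∪ s.image (· + 1), fun n hn => ?_⟩
  simp only [Finset.mem_union, Finset.mem_image] at hn
  push_neg at hn
  obtain ⟨h1, h2⟩ := hn
  have e1 : u n = 0 := hs n h1
  have e2 : u (n - 1) = 0 := hs _ (fun hm => (h2 _ hm) (by ring))
  simp [grad, e1, e2]

lemma FS_iter {u : ℤ → ℂ} (h : FS u) (k : ℕ) : FS (negLap^[k] u) := by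
  induction k with
  | zero => simpa using h
  | succ k ih => rw [Function.iterate_succ_apply']; exact FS_negLap ih

lemma FS_halfPow {u : ℤ → ℂ} (h : FS u) (l : ℕ) : FS (halfPow l u) := by
  by_cases hE : l % 2 = 0
  · rw [halfPow, if_pos hE]; exact FS_iter h _
  · rw [halfPow, if_neg hE]; exact FS_grad (FS_iter h _)

lemma adj_shift_down (v u : ℤ → ℂ) :
    ∑' n, (starRingEnd ℂ) (v n) * u (n - 1) = ∑' n, (starRingEnd ℂ) (v (n + 1)) * u n := by
  have h := tsum_shift' (fun n => (starRingEnd ℂ) (v (n + 1)) * u n) (-1)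
  rw [← h]
  apply tsum_congr; intro n
  rw [show n + -1 + 1 = n from by ring, show n + -1 = n - 1 from by ring]

lemma adj_shift_up (v u : ℤ → ℂ) :
    ∑' n, (starRingEnd ℂ) (v n) * u (n + 1) = ∑' n, (starRingEnd ℂ) (v (n - 1)) * u n := by
  have h := tsum_shift' (fun n => (starRingEnd ℂ) (v (n - 1)) * u n) 1
  rw [← h]
  apply tsum_congr; intro n
  rw [show n + 1 - 1 = n from by ring]

lemma tsum_comb (A B C : ℤ → ℂ) (hA : Summable A) (hB : Summable B) (hC : Summable C) :
    ∑' n, (2 * A n - B n - C n) = 2 * ∑' n, A n - ∑' n, B n - ∑' n, C n := by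
  rw [Summable.tsum_sub ((hA.mul_left 2).sub hB) hC, Summable.tsum_sub (hA.mul_left 2) hB, tsum_mul_left]

lemma adj_negLap (v u : ℤ → ℂ) (hu : FS u) :
    ∑' n, (starRingEnd ℂ) (v n) * negLap u n = ∑' n, (starRingEnd ℂ) (negLap v n) * u n := by
  have hA : Summable fun n => (starRingEnd ℂ) (v n) * u n := FS_summable (FS_mul _ hu)
  have hB : Summable fun n => (starRingEnd ℂ) (v n) * u (n - 1) := by
    have h1 : FS (fun n => u (n + (-1))) := FS_shift hu (-1)
    have h2 : FS (fun n => u (n - 1)) := by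
      obtain ⟨s, hs⟩ := h1
      exact ⟨s, fun n hn => by have := hs n hn; simpa [sub_eq_add_neg] using this⟩
    exact FS_summable (FS_mul _ h2)
  have hC : Summable fun n => (starRingEnd ℂ) (v n) * u (n + 1) :=
    FS_summable (FS_mul _ (FS_shift hu 1))
  have hB' : Summable fun n => (starRingEnd ℂ) (v (n + 1)) * u n :=
    FS_summable (FS_mul _ hu)
  have hC' : Summable fun n => (starRingEnd ℂ) (v (n - 1)) * u n :=
    FS_summable (FS_mul _ hu)
  calc ∑' n, (starRingEnd ℂ) (v n) * negLap u n
      = ∑' n, (2 * ((starRingEnd ℂ) (v n) * u n) - (starRingEnd ℂ) (v n) * u (n - 1)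
          - (starRingEnd ℂ) (v n) * u (n + 1)) := by
        apply tsum_congr; intro n; simp only [negLap]; ring
    _ = 2 * (∑' n, (starRingEnd ℂ) (v n) * u n) - (∑' n, (starRingEnd ℂ) (v n) * u (n - 1))
          - ∑' n, (starRingEnd ℂ) (v n) * u (n + 1) := tsum_comb _ _ _ hA hB hC
    _ = 2 * (∑' n, (starRingEnd ℂ) (v n) * u n) - (∑' n, (starRingEnd ℂ) (v (n + 1)) * u n)
          - ∑' n, (starRingEnd ℂ) (v (n - 1)) * u n := by
        rw [adj_shift_down, adj_shift_up]
    _ = ∑' n, (2 * ((starRingEnd ℂ) (v n) * u n) - (starRingEnd ℂ) (v (n + 1)) * u n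
          - (starRingEnd ℂ) (v (n - 1)) * u n) := (tsum_comb _ _ _ hA hB' hC').symm
    _ = ∑' n, (starRingEnd ℂ) (negLap v n) * u n := by
        apply tsum_congr; intro n; simp only [negLap, map_sub, map_mul, map_ofNat]; ring

lemma adj_iter (v u : ℤ → ℂ) (hu : FS u) (k : ℕ) :
    ∑' n, (starRingEnd ℂ) (v n) * negLap^[k] u n
      = ∑' n, (starRingEnd ℂ) (negLap^[k] v n) * u n := by
  induction k generalizing v with
  | zero => simp
  | succ k ih =>
    rw [Function.iterate_succ_apply']
    rw [adj_negLap v _ (FS_iter hu k), ih (negLap v), ← Function.iterate_succ_apply,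
      Function.iterate_succ_apply']

lemma adj_grad (v w : ℤ → ℂ) (hw : FS w) :
    ∑' n, (starRingEnd ℂ) (v n) * grad w n = - ∑' n, (starRingEnd ℂ) (fdiff v n) * w n := by
  have hA : Summable fun n => (starRingEnd ℂ) (v n) * w n := FS_summable (FS_mul _ hw)
  have hB : Summable fun n => (starRingEnd ℂ) (v n) * w (n - 1) := by
    have h1 : FS (fun n => w (n + (-1))) := FS_shift hw (-1)
    have h2 : FS (fun n => w (n - 1)) := by
      obtain ⟨s, hs⟩ := h1
      exact ⟨s, fun n hn => by have := hs n hn; simpa [sub_eq_add_neg] using this⟩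
    exact FS_summable (FS_mul _ h2)
  have hB' : Summable fun n => (starRingEnd ℂ) (v (n + 1)) * w n := FS_summable (FS_mul _ hw)
  calc ∑' n, (starRingEnd ℂ) (v n) * grad w n
      = ∑' n, ((starRingEnd ℂ) (v n) * w n - (starRingEnd ℂ) (v n) * w (n - 1)) := by
        apply tsum_congr; intro n; simp only [grad]; ring
    _ = (∑' n, (starRingEnd ℂ) (v n) * w n) - ∑' n, (starRingEnd ℂ) (v n) * w (n - 1) :=
        Summable.tsum_sub hA hB
    _ = (∑' n, (starRingEnd ℂ) (v n) * w n) - ∑' n, (starRingEnd ℂ) (v (n + 1)) * w n := by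
        rw [adj_shift_down]
    _ = ∑' n, ((starRingEnd ℂ) (v n) * w n - (starRingEnd ℂ) (v (n + 1)) * w n) :=
        (Summable.tsum_sub hA hB').symm
    _ = ∑' n, - ((starRingEnd ℂ) (fdiff v n) * w n) := by
        apply tsum_congr; intro n; simp only [fdiff, map_sub]; ring
    _ = - ∑' n, (starRingEnd ℂ) (fdiff v n) * w n := tsum_neg

lemma tendsto_zero_of_summable_sq (v : ℤ → ℂ) (h : Summable fun n : ℤ => ‖v n‖ ^ 2) :
    Tendsto v atTop (nhds 0) := by
  have h1 : Tendsto (fun n => ‖v n‖ ^ 2) cofinite (nhds 0) := h.tendsto_cofinite_zero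
  have h2 : Tendsto (fun n => ‖v n‖ ^ 2) atTop (nhds 0) :=
    h1.mono_left (by rw [Int.cofinite_eq]; exact le_sup_right)
  rw [tendsto_zero_iff_norm_tendsto_zero]
  have h3 : Tendsto (fun n => Real.sqrt (‖v n‖ ^ 2)) atTop (nhds (Real.sqrt 0)) :=
    (Real.continuous_sqrt.tendsto 0).comp h2
  simpa [Real.sqrt_sq (norm_nonneg _)] using h3

lemma tendsto_shift {z : ℤ → ℂ} (hz : Tendsto z atTop (nhds 0)) (c : ℤ) :
    Tendsto (fun n => z (n + c)) atTop (nhds 0) :=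
  hz.comp (tendsto_atTop_add_const_right _ c tendsto_id)

lemma tendsto_fdiff {z : ℤ → ℂ} (hz : Tendsto z atTop (nhds 0)) :
    Tendsto (fdiff z) atTop (nhds 0) := by
  have := (tendsto_shift hz 1).sub hz
  rw [show fdiff z = fun n => z (n + 1) - z n from rfl]
  simpa [fdiff] using this

lemma tendsto_negLap {z : ℤ → ℂ} (hz : Tendsto z atTop (nhds 0)) :
    Tendsto (negLap z) atTop (nhds 0) := by
  have h1 : Tendsto (fun n => z (n - 1)) atTop (nhds 0) := by
    have := tendsto_shift hz (-1)
    simpa [sub_eq_add_neg] using this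
  have := ((hz.const_mul (2:ℂ)).sub h1).sub (tendsto_shift hz 1)
  rw [show negLap z = fun n => 2 * z n - z (n - 1) - z (n + 1) from rfl]
  simpa [negLap] using this

lemma tendsto_iter {z : ℤ → ℂ} (hz : Tendsto z atTop (nhds 0)) (k : ℕ) :
    Tendsto (negLap^[k] z) atTop (nhds 0) := by
  induction k with
  | zero => simpa using hz
  | succ k ih => rw [Function.iterate_succ_apply']; exact tendsto_negLap ih

lemma eventually_const_zero (z : ℤ → ℂ) (hz : Tendsto z atTop (nhds 0)) (a : ℤ)
    (h : ∀ m, a ≤ m → z (m + 1) = z m) : ∀ m, a ≤ m → z m = 0 := by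
  have key : ∀ m, a ≤ m → z m = z a := by
    refine Int.le_induction rfl ?_
    intro n hn ih
    rw [h n hn, ih]
  have hza : Tendsto z atTop (nhds (z a)) := by
    refine Tendsto.congr' ?_ tendsto_const_nhds
    filter_upwards [eventually_ge_atTop a] with m hm
    exact (key m hm).symm
  have h0 := tendsto_nhds_unique hza hz
  intro m hm; rw [key m hm, h0]

lemma decay_zero (w : ℤ → ℂ) (hw : Tendsto w atTop (nhds 0)) :
    ∀ k : ℕ, ∀ a : ℤ, (∀ m, a ≤ m → negLap^[k] w m = 0) → ∀ n, a - k ≤ n → w n = 0 := by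
  intro k
  induction k with
  | zero => intro a h n hn; exact h n (by simpa using hn)
  | succ k ih =>
    intro a h n hn
    have hz0 : Tendsto (negLap^[k] w) atTop (nhds 0) := tendsto_iter hw k
    have hlap : ∀ m, a ≤ m → negLap (negLap^[k] w) m = 0 := by
      intro m hm; have := h m hm; rwa [Function.iterate_succ_apply'] at this
    have hconst : ∀ m, a - 1 ≤ m → fdiff (negLap^[k] w) (m + 1) = fdiff (negLap^[k] w) m := by
      intro m hm
      have h2 := hlap (m + 1) (by omega)
      simp only [negLap] at h2
      rw [show m + 1 - 1 = m from by ring] at h2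
      simp only [fdiff]
      linear_combination -h2
    have h1 : ∀ m, a - 1 ≤ m → fdiff (negLap^[k] w) m = 0 :=
      eventually_const_zero _ (tendsto_fdiff hz0) (a - 1) hconst
    have h2 : ∀ m, a - 1 ≤ m → negLap^[k] w m = 0 := by
      refine eventually_const_zero _ hz0 (a - 1) ?_
      intro m hm
      have := h1 m hm
      simp only [fdiff] at this
      linear_combination this
    exact ih (a - 1) h2 n (by push_cast at hn ⊢; omega)

/-- Kronecker delta at `m` -/
def dlt (m : ℤ) : ℤ → ℂ := fun n => if n = m then 1 else 0

lemma dlt_FS (m : ℤ) : FS (dlt m) :=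
  ⟨{m}, fun n hn => if_neg (by simpa using hn)⟩

lemma dlt_memH0 (l : ℕ) (m : ℤ) (hm : (l : ℤ) ≤ m) : memH0 l (dlt m) :=
  ⟨fun n hn => if_neg (by omega), ⟨m + 1, fun n hn => if_neg (by omega)⟩⟩

lemma tsum_dlt (g : ℤ → ℂ) (m : ℤ) : ∑' n, g n * dlt m n = g m := by
  rw [tsum_eq_single m (fun b hb => by simp [dlt, hb])]
  simp [dlt]

lemma orth_key (l : ℕ) (v : ℤ → ℂ)
    (horth : ∀ u : ℤ → ℂ, memH0 l u → ∑' n : ℤ, (starRingEnd ℂ) (v n) * halfPow l u n = 0) :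
    ∀ m : ℤ, (l : ℤ) ≤ m →
      (if l % 2 = 0 then negLap^[l / 2] v m else negLap^[l / 2] (fdiff v) m) = 0 := by
  intro m hm
  have h0 := horth (dlt m) (dlt_memH0 l m hm)
  by_cases hE : l % 2 = 0
  · rw [if_pos hE]
    rw [show halfPow l (dlt m) = negLap^[l / 2] (dlt m) from by rw [halfPow, if_pos hE]] at h0
    rw [adj_iter v _ (dlt_FS m) (l / 2), tsum_dlt] at h0
    simpa using congrArg (starRingEnd ℂ) h0
  · rw [if_neg hE]
    rw [show halfPow l (dlt m) = grad (negLap^[l / 2] (dlt m)) from by rw [halfPow, if_neg hE]]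
      at h0
    rw [adj_grad v _ (FS_iter (dlt_FS m) (l / 2)),
      adj_iter (fdiff v) _ (dlt_FS m) (l / 2), tsum_dlt, neg_eq_zero] at h0
    simpa using congrArg (starRingEnd ℂ) h0

lemma part2 (l : ℕ) (hl : 1 ≤ l) (v : ℤ → ℂ) (hv : memH (ceilHalf l) v)
    (hs : Summable fun n : ℤ => ‖v n‖ ^ 2)
    (horth : ∀ u : ℤ → ℂ, memH0 l u →
      ∑' n : ℤ, (starRingEnd ℂ) (v n) * halfPow l u n = 0) :
    v = 0 := by
  have hv0 := tendsto_zero_of_summable_sq v hs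
  have hkey := orth_key l v horth
  funext n
  show v n = 0
  by_cases hE : l % 2 = 0
  · obtain ⟨k, rfl⟩ : ∃ k, l = 2 * k := ⟨l / 2, by omega⟩
    have hk2 : (2 * k) / 2 = k := by omega
    have hc : ceilHalf (2 * k) = (k : ℤ) := by
      rw [ceilHalf, show (2 * k + 1) / 2 = k from by omega]
    have h1 : ∀ m : ℤ, ((2 * k : ℕ) : ℤ) ≤ m → negLap^[k] v m = 0 := by
      intro m hm
      have := hkey m hm
      rwa [if_pos hE, hk2] at this
    rcases lt_or_ge n (k : ℤ) with h | h
    · exact hv n (by rwa [hc])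
    · exact decay_zero v hv0 k ((2 * k : ℕ) : ℤ) h1 n (by push_cast; omega)
  · obtain ⟨k, rfl⟩ : ∃ k, l = 2 * k + 1 := ⟨l / 2, by omega⟩
    have hk2 : (2 * k + 1) / 2 = k := by omega
    have hc : ceilHalf (2 * k + 1) = (k : ℤ) + 1 := by
      rw [ceilHalf, show (2 * k + 1 + 1) / 2 = k + 1 from by omega]
      push_cast; ring
    have h1 : ∀ m : ℤ, ((2 * k + 1 : ℕ) : ℤ) ≤ m → negLap^[k] (fdiff v) m = 0 := by
      intro m hm
      have := hkey m hm
      rwa [if_neg hE, hk2] at this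
    have h2 : ∀ m : ℤ, (k : ℤ) + 1 ≤ m → fdiff v m = 0 := fun m hm =>
      decay_zero (fdiff v) (tendsto_fdiff hv0) k _ h1 m (by push_cast; omega)
    have h3 : ∀ m : ℤ, (k : ℤ) + 1 ≤ m → v m = 0 := by
      refine eventually_const_zero v hv0 _ ?_
      intro m hm
      have := h2 m hm
      simp only [fdiff] at this
      linear_combination this
    rcases lt_or_ge n ((k : ℤ) + 1) with h | h
    · exact hv n (by rwa [hc])
    · exact h3 n h

/-! ### Linearity and membership lemmas -/

lemma negLap_add (u w : ℤ → ℂ) : negLap (u + w) = negLap u + negLap w := by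
  funext n; simp only [negLap, Pi.add_apply]; ring

lemma negLap_smul (c : ℂ) (u : ℤ → ℂ) : negLap (c • u) = c • negLap u := by
  funext n; simp only [negLap, Pi.smul_apply, smul_eq_mul]; ring

lemma grad_add (u w : ℤ → ℂ) : grad (u + w) = grad u + grad w := by
  funext n; simp only [grad, Pi.add_apply]; ring

lemma grad_smul (c : ℂ) (u : ℤ → ℂ) : grad (c • u) = c • grad u := by
  funext n; simp only [grad, Pi.smul_apply, smul_eq_mul]; ring

lemma iter_add (k : ℕ) (u w : ℤ → ℂ) :
    negLap^[k] (u + w) = negLap^[k] u + negLap^[k] w := by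
  induction k with
  | zero => simp
  | succ k ih => simp only [Function.iterate_succ_apply', ih, negLap_add]

lemma iter_smul (k : ℕ) (c : ℂ) (u : ℤ → ℂ) : negLap^[k] (c • u) = c • negLap^[k] u := by
  induction k with
  | zero => simp
  | succ k ih => simp only [Function.iterate_succ_apply', ih, negLap_smul]

lemma halfPow_add (l : ℕ) (u w : ℤ → ℂ) :
    halfPow l (u + w) = halfPow l u + halfPow l w := by
  by_cases hE : l % 2 = 0
  · simp only [halfPow, if_pos hE, iter_add]
  · simp only [halfPow, if_neg hE, iter_add, grad_add]

lemma halfPow_smul (l : ℕ) (c : ℂ) (u : ℤ → ℂ) :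
    halfPow l (c • u) = c • halfPow l u := by
  by_cases hE : l % 2 = 0
  · simp only [halfPow, if_pos hE, iter_smul]
  · simp only [halfPow, if_neg hE, iter_smul, grad_smul]

lemma halfPow_zero (l : ℕ) : halfPow l (0 : ℤ → ℂ) = 0 := by
  have h := halfPow_smul l 0 0
  simpa using h

lemma memH0_add {a : ℤ} {u w : ℤ → ℂ} (hu : memH0 a u) (hw : memH0 a w) :
    memH0 a (u + w) := by
  refine ⟨fun n hn => by simp [Pi.add_apply, hu.1 n hn, hw.1 n hn], ?_⟩
  obtain ⟨N, hN⟩ := hu.2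
  obtain ⟨M, hM⟩ := hw.2
  exact ⟨max N M, fun n hn => by
    simp [Pi.add_apply, hN n (le_trans (le_max_left _ _) hn),
      hM n (le_trans (le_max_right _ _) hn)]⟩

lemma memH0_smul {a : ℤ} (c : ℂ) {u : ℤ → ℂ} (hu : memH0 a u) : memH0 a (c • u) := by
  refine ⟨fun n hn => by simp [hu.1 n hn], ?_⟩
  obtain ⟨N, hN⟩ := hu.2
  exact ⟨N, fun n hn => by simp [hN n hn]⟩

lemma memH0_zero (a : ℤ) : memH0 a (0 : ℤ → ℂ) := ⟨fun n _ => rfl, ⟨0, fun n _ => rfl⟩⟩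

lemma memH0_FS {a : ℤ} {u : ℤ → ℂ} (h : memH0 a u) : FS u := by
  obtain ⟨h1, N, hN⟩ := h
  refine ⟨Finset.Icc a N, fun n hn => ?_⟩
  rw [Finset.mem_Icc] at hn
  rcases lt_or_ge n a with hlt | hge
  · exact h1 n hlt
  · exact hN n (by omega)

lemma memH_negLap {j : ℤ} {u : ℤ → ℂ} (h : memH j u) : memH (j - 1) (negLap u) := by
  intro n hn
  simp [negLap, h n (by omega), h (n - 1) (by omega), h (n + 1) (by omega)]

lemma memH_iter {j : ℤ} {u : ℤ → ℂ} (h : memH j u) (k : ℕ) :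
    memH (j - k) (negLap^[k] u) := by
  induction k with
  | zero => simpa using h
  | succ k ih =>
    rw [Function.iterate_succ_apply']
    intro n hn
    exact memH_negLap ih n (by push_cast at hn ⊢; omega)

lemma memH_grad {j : ℤ} {u : ℤ → ℂ} (h : memH j u) : memH j (grad u) := by
  intro n hn
  simp [grad, h n hn, h (n - 1) (by omega)]

lemma memH_mono {j j' : ℤ} {u : ℤ → ℂ} (hj : j' ≤ j) (h : memH j u) : memH j' u :=
  fun n hn => h n (by omega)

lemma memH_halfPow {l : ℕ} {u : ℤ → ℂ} (h : memH l u) :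
    memH (ceilHalf l) (halfPow l u) := by
  have hit := memH_iter h (l / 2)
  by_cases hE : l % 2 = 0
  · rw [halfPow, if_pos hE]
    exact memH_mono (by rw [ceilHalf]; omega) hit
  · rw [halfPow, if_neg hE]
    exact memH_mono (by rw [ceilHalf]; omega) (memH_grad hit)

/-! ### The Hilbert space argument -/

abbrev E2 := lp (fun _ : ℤ => ℂ) 2

lemma memℓp_two (f : ℤ → ℂ) (h : Summable fun n => ‖f n‖ ^ 2) : Memℓp f 2 := by
  apply memℓp_gen
  have h2 : ((2 : ℝ≥0∞)).toReal = ((2 : ℕ) : ℝ) := by simp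
  rw [h2]
  simpa [Real.rpow_natCast] using h

lemma summable_sq (f : E2) : Summable fun n : ℤ => ‖(f : ℤ → ℂ) n‖ ^ 2 := by
  have h1 := (lp.memℓp f).summable (by norm_num : (0 : ℝ) < ((2 : ℝ≥0∞)).toReal)
  have h2 : ((2 : ℝ≥0∞)).toReal = ((2 : ℕ) : ℝ) := by simp
  rw [h2] at h1
  simpa [Real.rpow_natCast] using h1

lemma norm_sq_eq (f : E2) : ‖f‖ ^ 2 = ∑' n : ℤ, ‖(f : ℤ → ℂ) n‖ ^ 2 := by
  have h1 := lp.norm_rpow_eq_tsum (by norm_num : (0 : ℝ) < ((2 : ℝ≥0∞)).toReal) f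
  have h2 : ((2 : ℝ≥0∞)).toReal = ((2 : ℕ) : ℝ) := by simp
  rw [h2] at h1
  simpa [Real.rpow_natCast] using h1

lemma FS_memℓp {f : ℤ → ℂ} (h : FS f) : Memℓp f 2 := by
  apply memℓp_two
  obtain ⟨s, hs⟩ := h
  exact summable_of_ne_finset_zero (s := s) (fun n hn => by simp [hs n hn])

def rangeSub (l : ℕ) : Submodule ℂ E2 where
  carrier := {f : E2 | ∃ u : ℤ → ℂ, memH0 l u ∧ ∀ n, (f : ℤ → ℂ) n = halfPow l u n}
  add_mem' := by
    rintro f g ⟨u, hu, hf⟩ ⟨w, hw, hg⟩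
    refine ⟨u + w, memH0_add hu hw, fun n => ?_⟩
    rw [lp.coeFn_add]
    simp only [Pi.add_apply, hf n, hg n, halfPow_add]
  zero_mem' := by
    refine ⟨0, memH0_zero l, fun n => ?_⟩
    rw [lp.coeFn_zero]
    simp [halfPow_zero]
  smul_mem' := by
    rintro c f ⟨u, hu, hf⟩
    refine ⟨c • u, memH0_smul c hu, fun n => ?_⟩
    rw [lp.coeFn_smul]
    simp only [Pi.smul_apply, hf n, halfPow_smul]

lemma continuous_eval (n : ℤ) : Continuous (fun f : E2 => (f : ℤ → ℂ) n) := by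
  refine (LipschitzWith.of_dist_le_mul (K := 1) ?_).continuous
  intro f g
  rw [dist_eq_norm, dist_eq_norm]
  have h1 : (f : ℤ → ℂ) n - (g : ℤ → ℂ) n = ((f - g : E2) : ℤ → ℂ) n := by
    rw [lp.coeFn_sub]; simp
  rw [h1, NNReal.coe_one, one_mul]
  exact lp.norm_apply_le_norm (by norm_num) (f - g) n

lemma part1 (l : ℕ) (hl : 1 ≤ l) (v : ℤ → ℂ) (hv : memH (ceilHalf l) v)
    (hs : Summable fun n : ℤ => ‖v n‖ ^ 2) (ε : ℝ) (hε : 0 < ε) :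
    ∃ u : ℤ → ℂ, memH0 l u ∧ ∑' n : ℤ, ‖v n - halfPow l u n‖ ^ 2 < ε := by
  set K := (rangeSub l).topologicalClosure with hK
  haveI : CompleteSpace K := (Submodule.isClosed_topologicalClosure _).completeSpace_coe
  set vlp : E2 := ⟨v, memℓp_two v hs⟩ with hvlp
  obtain ⟨y, hy, z, hz, hvyz⟩ := K.exists_add_mem_mem_orthogonal vlp
  have hKsub : ∀ f ∈ K, memH (ceilHalf l) (f : ℤ → ℂ) := by
    intro f hf n hn
    have hcl : (K : Set E2) ⊆ {g : E2 | (g : ℤ → ℂ) n = 0} := by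
      rw [hK, Submodule.topologicalClosure_coe]
      refine closure_minimal ?_ (isClosed_eq (continuous_eval n) continuous_const)
      rintro g ⟨u, hu, hg⟩
      show (g : ℤ → ℂ) n = 0
      rw [hg n]
      exact memH_halfPow hu.1 n hn
    exact hcl hf
  have hz0 : (z : ℤ → ℂ) = 0 := by
    apply part2 l hl _ ?_ (summable_sq z) ?_
    · intro n hn
      have hzn : (z : ℤ → ℂ) n = v n - (y : ℤ → ℂ) n := by
        have hzv : z = vlp - y := by rw [hvyz]; abel
        rw [hzv, lp.coeFn_sub]
        simp [hvlp]
      rw [hzn, hv n hn, hKsub y hy n hn, sub_zero]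
    · intro u hu
      set r : E2 := ⟨halfPow l u, FS_memℓp (FS_halfPow (memH0_FS hu) l)⟩ with hr
      have hrK : r ∈ K := Submodule.le_topologicalClosure _ ⟨u, hu, fun n => rfl⟩
      have horth := (Submodule.mem_orthogonal _ _).mp hz r hrK
      have h2 : (inner ℂ z r : ℂ) = 0 := by rw [← inner_conj_symm, horth, map_zero]
      rw [lp.inner_eq_tsum] at h2
      simp only [RCLike.inner_apply] at h2
      rw [← h2]; apply tsum_congr; intro n; rw [mul_comm]
  have hvK : vlp ∈ K := by
    have hzz : z = 0 := by
      apply Subtype.ext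
      rw [hz0, lp.coeFn_zero]
    rw [hvyz, hzz, add_zero]
    exact hy
  have hvcl : (vlp : E2) ∈ closure ((rangeSub l : Submodule ℂ E2) : Set E2) := by
    rw [← Submodule.topologicalClosure_coe]
    exact hvK
  obtain ⟨r, hrmem, hrd⟩ := Metric.mem_closure_iff.mp hvcl (Real.sqrt ε) (Real.sqrt_pos.mpr hε)
  obtain ⟨u, hu, hru⟩ := hrmem
  refine ⟨u, hu, ?_⟩
  have he : (∑' n : ℤ, ‖v n - halfPow l u n‖ ^ 2) = ‖vlp - r‖ ^ 2 := by
    rw [norm_sq_eq]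
    apply tsum_congr; intro n
    rw [lp.coeFn_sub]
    simp [hvlp, hru n]
  rw [he]
  have h1 : ‖vlp - r‖ < Real.sqrt ε := by rw [← dist_eq_norm]; exact hrd
  calc ‖vlp - r‖ ^ 2 < Real.sqrt ε ^ 2 :=
        pow_lt_pow_left₀ h1 (norm_nonneg _) two_ne_zero
    _ = ε := Real.sq_sqrt hε.le


/-- Step 1 of Lemma `extend`: the range of `(-Δ)^{ℓ/2}` on `𝓗₀^ℓ`
is dense in `𝓗^{⌈ℓ/2⌉} = H^{⌈ℓ/2⌉} ∩ ℓ²(ℤ)`; equivalently, any `v ∈ 𝓗^{⌈ℓ/2⌉}`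
orthogonal to the range vanishes. -/
theorem statement13 (l : ℕ) (hl : 1 ≤ l) :
    (∀ v : ℤ → ℂ, memH (ceilHalf l) v → Summable (fun n : ℤ => ‖v n‖ ^ 2) →
      ∀ ε : ℝ, 0 < ε → ∃ u : ℤ → ℂ, memH0 l u ∧
        ∑' n : ℤ, ‖v n - halfPow l u n‖ ^ 2 < ε) ∧
    (∀ v : ℤ → ℂ, memH (ceilHalf l) v → Summable (fun n : ℤ => ‖v n‖ ^ 2) →
      (∀ u : ℤ → ℂ, memH0 l u → ∑' n : ℤ, (starRingEnd ℂ) (v n) * halfPow l u n = 0) →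
      v = 0) :=
  ⟨part1 l hl, part2 l hl⟩

end HRB
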